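/- Date-0 corruption is harmful: the closed-form equilibrium GDP Y_1 = (1 − τ_{2,1}γ_{c,1})(1 + a_2 γ_{d,0}T_0) A_2 K_1 is strictly increasing in γ_{1,0} and in γ_{2,0} when T_0 > 0, and strictly increasing in γ_{d,0} when a_2 T_0 > 0 and K_1 > 0 and 1 − τ_{2,1}γ_{c,1} > 0 (all other parameters held fixed). Consequently, raising the diverted date-0 fraction γ_{c,0} = 1 − γ_{1,0} − γ_{2,0} − γ_{d,0} by lowering any of γ_{1,0}, γ_{2,0}, γ_{d,0} strictly lowers Y_1. -/
import Mathlib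


open Set

/-- Date-0 government revenue `T0 = τ10·w1 + τ20·w2`. -/
noncomputable def T0 (w1 w2 τ10 τ20 : ℝ) : ℝ := τ10 * w1 + τ20 * w2

/-- Closed-form equilibrium aggregate capital of the two-agent log-linear
economy (Proposition 4.1):
`K1 = [β2((1−τ20)w2 + γ20 T0)/(1+β2) + β1((1−τ10)w1 + γ10 T0)/(1+β1)] /
[1 + (γ21/(1+β2) + γ11/(1+β1))·τ21/(1−τ21)]`. -/
noncomputable def K1 (w1 w2 β1 β2 τ10 τ20 τ21 γ10 γ20 γ11 γ21 : ℝ) : ℝ :=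
  (β2 * ((1 - τ20) * w2 + γ20 * T0 w1 w2 τ10 τ20) / (1 + β2) +
    β1 * ((1 - τ10) * w1 + γ10 * T0 w1 w2 τ10 τ20) / (1 + β1)) /
  (1 + (γ21 / (1 + β2) + γ11 / (1 + β1)) * (τ21 / (1 - τ21)))

/-- Closed-form equilibrium date-1 GDP of the two-agent log-linear economy
(Proposition 4.1): `Y1 = (1 − τ21 γc1)(1 + a2 γd T0) A2 K1` with
`γc1 = 1 − γ11 − γ21`. -/
noncomputable def Y1 (w1 w2 β1 β2 τ10 τ20 τ21 γ10 γ20 γ11 γ21 γd A2 a2 : ℝ) : ℝ :=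
  (1 - τ21 * (1 - γ11 - γ21)) * (1 + a2 * (γd * T0 w1 w2 τ10 τ20)) * A2 *
    K1 w1 w2 β1 β2 τ10 τ20 τ21 γ10 γ20 γ11 γ21

/-- date-0 corruption is harmful: the closed-form equilibrium
GDP `Y1 = (1 − τ21 γc1)(1 + a2 γd T0) A2 K1` is strictly increasing in `γ10` and
in `γ20` when `T0 > 0`, and strictly increasing in `γd` when `a2 T0 > 0`,
`K1 > 0` and `1 − τ21 γc1 > 0` (all other parameters held fixed).  Hence raising
the diverted date-0 fraction `γc0 = 1 − γ10 − γ20 − γd` by lowering any of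
`γ10, γ20, γd` strictly lowers `Y1`. -/
theorem Y1_strictMono_in_date0_shares
    (w1 w2 β1 β2 τ10 τ20 τ11 τ21 γ11 γ21 A2 a2 : ℝ)
    (hw1 : 0 < w1) (hw2 : 0 < w2)
    (hβ1 : β1 ∈ Set.Ioo (0 : ℝ) 1) (hβ2 : β2 ∈ Set.Ioo (0 : ℝ) 1)
    (hτ10 : τ10 ∈ Set.Ico (0 : ℝ) 1) (hτ20 : τ20 ∈ Set.Ico (0 : ℝ) 1)
    (hτ11 : τ11 ∈ Set.Ico (0 : ℝ) 1) (hτ21 : τ21 ∈ Set.Ico (0 : ℝ) 1)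
    (hγ11 : γ11 ∈ Set.Icc (0 : ℝ) 1) (hγ21 : γ21 ∈ Set.Icc (0 : ℝ) 1)
    (hsum1 : γ11 + γ21 ≤ 1) (hA2 : 0 < A2) (ha2 : 0 ≤ a2) :
    ((0 < T0 w1 w2 τ10 τ20) →
      ∀ γ10 γ10' γ20 γd : ℝ, γ10 ∈ Set.Icc (0 : ℝ) 1 → γ10' ∈ Set.Icc (0 : ℝ) 1 →
        γ20 ∈ Set.Icc (0 : ℝ) 1 → γd ∈ Set.Icc (0 : ℝ) 1 →
        γ10 + γ20 + γd ≤ 1 → γ10' + γ20 + γd ≤ 1 → γ10 < γ10' →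
        Y1 w1 w2 β1 β2 τ10 τ20 τ21 γ10 γ20 γ11 γ21 γd A2 a2 <
          Y1 w1 w2 β1 β2 τ10 τ20 τ21 γ10' γ20 γ11 γ21 γd A2 a2) ∧
    ((0 < T0 w1 w2 τ10 τ20) →
      ∀ γ10 γ20 γ20' γd : ℝ, γ10 ∈ Set.Icc (0 : ℝ) 1 → γ20 ∈ Set.Icc (0 : ℝ) 1 →
        γ20' ∈ Set.Icc (0 : ℝ) 1 → γd ∈ Set.Icc (0 : ℝ) 1 →
        γ10 + γ20 + γd ≤ 1 → γ10 + γ20' + γd ≤ 1 → γ20 < γ20' →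
        Y1 w1 w2 β1 β2 τ10 τ20 τ21 γ10 γ20 γ11 γ21 γd A2 a2 <
          Y1 w1 w2 β1 β2 τ10 τ20 τ21 γ10 γ20' γ11 γ21 γd A2 a2) ∧
    ((0 < a2 * T0 w1 w2 τ10 τ20) → (0 < 1 - τ21 * (1 - γ11 - γ21)) →
      ∀ γ10 γ20 γd γd' : ℝ, γ10 ∈ Set.Icc (0 : ℝ) 1 → γ20 ∈ Set.Icc (0 : ℝ) 1 →
        γd ∈ Set.Icc (0 : ℝ) 1 → γd' ∈ Set.Icc (0 : ℝ) 1 →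
        γ10 + γ20 + γd ≤ 1 → γ10 + γ20 + γd' ≤ 1 →
        0 < K1 w1 w2 β1 β2 τ10 τ20 τ21 γ10 γ20 γ11 γ21 → γd < γd' →
        Y1 w1 w2 β1 β2 τ10 τ20 τ21 γ10 γ20 γ11 γ21 γd A2 a2 <
          Y1 w1 w2 β1 β2 τ10 τ20 τ21 γ10 γ20 γ11 γ21 γd' A2 a2) := by
  obtain ⟨hβ1a, hβ1b⟩ := hβ1
  obtain ⟨hβ2a, hβ2b⟩ := hβ2
  obtain ⟨hτ21a, hτ21b⟩ := hτ21
  have hP : 0 < 1 - τ21 * (1 - γ11 - γ21) := by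
    nlinarith [mul_nonneg hτ21a hγ11.1, mul_nonneg hτ21a hγ21.1]
  have hD : 0 < 1 + (γ21 / (1 + β2) + γ11 / (1 + β1)) * (τ21 / (1 - τ21)) := by
    have h1 : 0 ≤ γ21 / (1 + β2) := div_nonneg hγ21.1 (by linarith)
    have h2 : 0 ≤ γ11 / (1 + β1) := div_nonneg hγ11.1 (by linarith)
    have h3 : 0 ≤ τ21 / (1 - τ21) := div_nonneg hτ21a (by linarith)
    nlinarith [mul_nonneg (add_nonneg h1 h2) h3]
  refine ⟨?_, ?_, ?_⟩
  · intro hT γ10 γ10' γ20 γd h1 h2 h3 h4 _ _ hlt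
    have hQ : 0 < 1 + a2 * (γd * T0 w1 w2 τ10 τ20) := by
      nlinarith [mul_nonneg ha2 (mul_nonneg h4.1 hT.le)]
    unfold Y1 K1
    gcongr
  · intro hT γ10 γ20 γ20' γd h1 h2 h3 h4 _ _ hlt
    have hQ : 0 < 1 + a2 * (γd * T0 w1 w2 τ10 τ20) := by
      nlinarith [mul_nonneg ha2 (mul_nonneg h4.1 hT.le)]
    unfold Y1 K1
    gcongr
  · intro haT hP' γ10 γ20 γd γd' h1 h2 h3 h4 _ _ hK hlt
    have ha2' : 0 < a2 := lt_of_le_of_ne ha2 (by rintro rfl; simp at haT)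
    have hT : 0 < T0 w1 w2 τ10 τ20 := by
      by_contra h
      push_neg at h
      nlinarith
    unfold Y1
    gcongr
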